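/- For n ≥ 2, if g(α) is odd for α ∈ {1,...,n}^n, then α satisfies: α_1 = α_2, α_{i+1} ∈ {α_i − 1, α_i} for all 1 ≤ i ≤ n−1, and α_n = 2. -/

import Mathlib

/-- The first spot in the list `l` not in `occ`, if any. -/
def firstFree (occ : Finset ℕ) (l : List ℕ) : Option ℕ :=
  l.find? (fun s => decide (s ∉ occ))

/-- Run a parking simulation: each car is a pair (preference, coin); `step`
decides where a car parks (or `none` if it fails). Returns `true` iff all cars park. -/
def runPark (step : Finset ℕ → ℕ → Bool → Option ℕ) :
    List (ℕ × Bool) → Finset ℕ → Bool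
  | [], _ => true
  | (a, b) :: rest, occ =>
    match step occ a b with
    | none => false
    | some s => runPark step rest (insert s occ)

/-- Run a parking simulation, returning the final set of occupied spots
(cars that fail to park simply do not park). -/
def runOcc (step : Finset ℕ → ℕ → Bool → Option ℕ) :
    List (ℕ × Bool) → Finset ℕ → Finset ℕ
  | [], occ => occ
  | (a, b) :: rest, occ =>
    match step occ a b with
    | none => runOcc step rest occ
    | some s => runOcc step rest (insert s occ)

/-- Random-direction step on spots `1,…,n`: if the preferred spot `a` is free, take it;
otherwise if the coin says forward, take the first free spot among `a+1,…,n`;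
otherwise take the first free spot among `a-1,…,1`. -/
def dirStep (n : ℕ) (occ : Finset ℕ) (a : ℕ) (fwd : Bool) : Option ℕ :=
  if a ∉ occ then some a
  else if fwd then firstFree occ (List.range' (a + 1) (n - a))
  else firstFree occ ((List.range' 1 (a - 1)).reverse)

/-- Random `k`-Naples step on spots `1,…,n`: if the preferred spot `a` is free, take it;
otherwise, if the coin says to back up, check spots `a-1, a-2, …, max(a-k,1)` one by one
taking the first free one; if none (or if the coin says not to back up), take the first
free spot among `a+1,…,n`. -/
def naplesStep (n k : ℕ) (occ : Finset ℕ) (a : ℕ) (back : Bool) : Option ℕ :=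
  if a ∉ occ then some a
  else
    let fwd := firstFree occ (List.range' (a + 1) (n - a))
    if back then
      match firstFree occ ((List.range' (max (a - k) 1) (min k (a - 1))).reverse) with
      | some s => some s
      | none => fwd
    else fwd

/-- Circular random-direction step on spots `1,…,n+1` arranged in a circle:
if the preferred spot `a` is free, take it; otherwise search clockwise
(`a+1, a+2, …` wrapping around) or counterclockwise according to the coin. -/
def circStep (n : ℕ) (occ : Finset ℕ) (a : ℕ) (cw : Bool) : Option ℕ :=
  if a ∉ occ then some a
  else if cw then
    firstFree occ (List.range' (a + 1) (n + 1 - a) ++ List.range' 1 (a - 1))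
  else
    firstFree occ ((List.range' 1 (a - 1)).reverse ++ (List.range' (a + 1) (n + 1 - a)).reverse)

/-- Whether all `n` cars with preferences `α` park in the random-direction model on spots
`1,…,n` with coins `b` (`b i = true` means car `i` searches forward when its spot is taken). -/
def parksDir (n : ℕ) (α : Fin n → ℕ) (b : Fin n → Bool) : Bool :=
  runPark (dirStep n) (List.ofFn (fun i => (α i, b i))) ∅

/-- Whether all `n` cars with preferences `α` park in the `k`-Naples model on spots `1,…,n`
with coins `b` (`b i = true` means car `i` backs up when its spot is taken). -/
def parksNaples (n k : ℕ) (α : Fin n → ℕ) (b : Fin n → Bool) : Bool :=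
  runPark (naplesStep n k) (List.ofFn (fun i => (α i, b i))) ∅

/-- The probability that all cars park in the random-direction model, where each car
whose spot is taken independently searches forward with probability `p` and backward
with probability `1 - p`. -/
noncomputable def probDir (n : ℕ) (p : ℝ) (α : Fin n → ℕ) : ℝ :=
  ∑ b : Fin n → Bool,
    (∏ i, if b i then p else 1 - p) * (if parksDir n α b then 1 else 0)

/-- The probability that all cars park in the random `k`-Naples model, where each car
whose spot is taken independently backs up (up to) `k` spots with probability `p`. -/
noncomputable def probNaples (n k : ℕ) (p : ℝ) (α : Fin n → ℕ) : ℝ :=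
  ∑ b : Fin n → Bool,
    (∏ i, if b i then p else 1 - p) * (if parksNaples n k α b then 1 else 0)

/-- The deterministic 1-Naples simulation for choices `β = (β₂,…,βₙ) ∈ {0,1}^{n-1}`:
car `i ≥ 2` backs up one spot first iff `β i = false` (i.e. `βᵢ = 0`); car 1's choice
is irrelevant since its preferred spot is always free. -/
def parksUnder (n : ℕ) (α : Fin n → ℕ) (β : Fin (n - 1) → Bool) : Bool :=
  parksNaples n 1 α
    (fun i => if h : 0 < i.1 then !(β ⟨i.1 - 1, by have := i.2; omega⟩) else false)

/-- `g α`: the number of choice sequences `β ∈ {0,1}^{n-1}` under which `α` parks in the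
deterministic 1-Naples simulation. -/
def g (n : ℕ) (α : Fin n → ℕ) : ℕ :=
  (Finset.univ.filter (fun β : Fin (n - 1) → Bool => parksUnder n α β = true)).card

/-- `α` is a parking function: every car parks when each car whose preferred spot is taken
only searches forward. -/
def forwardParks (n : ℕ) (α : Fin n → ℕ) : Bool :=
  parksNaples n 0 α (fun _ => false)

/-- `α` is a 1-Naples parking function: every car parks when each car whose preferred spot
is taken always backs up one spot first. -/
def naplesParks (n : ℕ) (α : Fin n → ℕ) : Bool :=
  parksNaples n 1 α (fun _ => true)

/-- The expected number of random `k`-Naples parking functions on `n` cars. -/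
noncomputable def T (k : ℕ) (p : ℝ) (n : ℕ) : ℝ :=
  ∑ α : Fin n → Fin n, probNaples n k p (fun i => (α i).1 + 1)

/-- The staircase preference list: `m t` copies of `t`, then `m (t-1)` copies of `t-1`,
…, down to `m 2` copies of `2`. -/
def stair (t : ℕ) (m : ℕ → ℕ) : List ℕ :=
  ((List.range' 2 (t - 1)).reverse).flatMap (fun j => List.replicate (m j) j)

/-- The staircase condition on a preference tuple: `α₁ = α₂`, each entry decreases by
`0` or `1`, and `αₙ = 2`. -/
def Staircase {n : ℕ} (hn : 2 ≤ n) (α : Fin n → ℕ) : Prop :=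
  α ⟨0, by omega⟩ = α ⟨1, by omega⟩ ∧
  (∀ i : ℕ, (h : i + 1 < n) →
    α ⟨i + 1, h⟩ = α ⟨i, by omega⟩ ∨ α ⟨i + 1, h⟩ + 1 = α ⟨i, by omega⟩) ∧
  α ⟨n - 1, by omega⟩ = 2

/-- The number of 1-Naples parking functions on `n` cars. -/
def Nnum (n : ℕ) : ℕ :=
  (Finset.univ.filter
    (fun α : Fin n → Fin n => naplesParks n (fun i => (α i).1 + 1) = true)).card
-- count function
def cnt (n : ℕ) : List ℕ → Finset ℕ → ℕ
  | [], _ => 1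
  | a :: rest, occ =>
    ((naplesStep n 1 occ a true).elim 0 (fun s => cnt n rest (insert s occ))) +
    ((naplesStep n 1 occ a false).elim 0 (fun s => cnt n rest (insert s occ)))

lemma count_eq (n : ℕ) : ∀ (m : ℕ) (p : Fin m → ℕ) (occ : Finset ℕ),
    (Finset.univ.filter fun β : Fin m → Bool =>
      runPark (naplesStep n 1) (List.ofFn fun i => (p i, β i)) occ = true).card
    = cnt n (List.ofFn p) occ := by
  intro m
  induction m with
  | zero =>
    intro p occ
    simp [List.ofFn_zero, runPark, cnt]
  | succ m ih =>
    intro p occ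
    rw [Finset.card_filter]
    rw [← Equiv.sum_comp (Fin.consEquiv (fun _ : Fin (m + 1) => Bool))]
    rw [Fintype.sum_prod_type]
    have hof : ∀ (b : Bool) (g : Fin m → Bool),
        (List.ofFn fun i => (p i, ((Fin.consEquiv (fun _ : Fin (m + 1) => Bool)) (b, g)) i))
        = (p 0, b) :: List.ofFn (fun i : Fin m => (p i.succ, g i)) := by
      intro b g
      rw [List.ofFn_succ]
      simp [Fin.consEquiv]
    simp only [hof]
    have hrun : ∀ (b : Bool) (g : Fin m → Bool),
        runPark (naplesStep n 1) ((p 0, b) :: List.ofFn (fun i : Fin m => (p i.succ, g i))) occ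
        = match naplesStep n 1 occ (p 0) b with
          | none => false
          | some s => runPark (naplesStep n 1) (List.ofFn (fun i : Fin m => (p i.succ, g i))) (insert s occ) := by
      intro b g; rw [runPark]
    simp only [hrun]
    have key : ∀ b : Bool,
        (∑ g : Fin m → Bool, if (match naplesStep n 1 occ (p 0) b with
          | none => false
          | some s => runPark (naplesStep n 1) (List.ofFn (fun i : Fin m => (p i.succ, g i))) (insert s occ)) = true then 1 else 0)
        = (naplesStep n 1 occ (p 0) b).elim 0
            (fun s => cnt n (List.ofFn fun i : Fin m => p i.succ) (insert s occ)) := by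
      intro b
      rcases h : naplesStep n 1 occ (p 0) b with _ | s
      · simp [h]
      · simp only [h, Option.elim]
        rw [← ih (fun i => p i.succ) (insert s occ), Finset.card_filter]
    rw [Fintype.sum_bool]
    rw [key true, key false]
    rw [List.ofFn_succ]
    rfl

lemma g_eq_cnt (m : ℕ) (α : Fin (m + 1) → ℕ) :
    g (m + 1) α = cnt (m + 1) (List.ofFn fun i : Fin m => α i.succ) {α 0} := by
  have hunder : ∀ β : Fin m → Bool, parksUnder (m + 1) α β =
      runPark (naplesStep (m + 1) 1)
        (List.ofFn fun i : Fin m => (α i.succ, !(β i))) {α 0} := by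
    intro β
    unfold parksUnder parksNaples
    rw [List.ofFn_succ, runPark]
    have h0 : ∀ b, naplesStep (m + 1) 1 ∅ (α 0) b = some (α 0) := by
      intro b; rw [naplesStep, if_pos (by simp)]
    rw [h0]
    dsimp only
    apply congrArg (fun l => runPark (naplesStep (m + 1) 1) l {α 0})
    apply congrArg
    funext i
    simp only [Fin.val_succ, Nat.zero_lt_succ, dif_pos, Nat.add_sub_cancel]
    rfl
  unfold g
  simp only [hunder]
  rw [← count_eq (m + 1) m (fun i : Fin m => α i.succ) {α 0}]
  apply Finset.card_nbij (fun β => fun i => !(β i))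
  · intro β hβ
    simp only [Finset.mem_filter, Finset.mem_univ, true_and] at hβ ⊢
    simpa [Bool.not_not] using hβ
  · intro β hβ β' hβ' h
    funext i
    have := congrFun h i
    simpa using this
  · intro β hβ
    refine ⟨fun i => !(β i), ?_, by funext i; simp⟩
    simp only [Finset.coe_filter, Set.mem_setOf_eq, Finset.mem_univ, true_and] at hβ ⊢
    simpa [Bool.not_not] using hβ

def Q : ℕ → List ℕ → Prop
  | l, [] => l = 1
  | l, a :: rest => a = l ∧ 2 ≤ a ∧ (Q (a - 1) rest ∨ Q a rest)

lemma firstFree_Icc (l r n : ℕ) (hlr : l ≤ r) (hrn : r ≤ n) :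
    firstFree (Finset.Icc l r) (List.range' (l + 1) (n - l)) =
    if r < n then some (r + 1) else none := by
  have hsplit : List.range' (l + 1) (n - l) =
      List.range' (l + 1) (r - l) ++ List.range' (r + 1) (n - r) := by
    rw [show r + 1 = (l + 1) + (r - l) by omega] 
    rw [List.range'_append_1]
    congr 1
    omega
  rw [firstFree, hsplit, List.find?_append]
  have h1 : (List.range' (l + 1) (r - l)).find? (fun s => decide (s ∉ Finset.Icc l r)) = none := by
    rw [List.find?_eq_none]
    intro x hx
    rw [List.mem_range'_1] at hx
    simp only [decide_eq_true_eq, Decidable.not_not, Finset.mem_Icc]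
    omega
  rw [h1, Option.none_or]
  by_cases h : r < n
  · rw [if_pos h]
    rw [show n - r = (n - r - 1) + 1 by omega, List.range'_succ, List.find?_cons_of_pos]
    simp only [decide_eq_true_eq, Finset.mem_Icc]
    omega
  · rw [if_neg h, show n - r = 0 by omega]
    rfl

lemma main_parity (n : ℕ) : ∀ (prefs : List ℕ) (l r : ℕ), 1 ≤ l → l ≤ r → r ≤ n →
    r + 1 + prefs.length = n + l → Odd (cnt n prefs (Finset.Icc l r)) → Q l prefs := by
  intro prefs
  induction prefs with
  | nil =>
    intro l r h1 h2 h3 h4 _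
    simp only [List.length_nil] at h4
    show l = 1
    omega
  | cons a rest ih =>
    intro l r h1 h2 h3 h4 hodd
    rw [cnt] at hodd
    by_cases hmem : a ∈ Finset.Icc l r
    · by_cases hrel : 2 ≤ a ∧ a - 1 ∉ Finset.Icc l r
      · -- relevant step: a = l
        obtain ⟨ha2, hfree⟩ := hrel
        rw [Finset.mem_Icc] at hmem
        have hal : a = l := by
          rw [Finset.mem_Icc, not_and_or, not_le, not_le] at hfree
          omega
        -- back step computes
        have hmem' : a ∈ Finset.Icc l r := Finset.mem_Icc.mpr hmem
        have hback : naplesStep n 1 (Finset.Icc l r) a true = some (a - 1) := by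
          rw [naplesStep, if_neg (not_not_intro hmem')]
          dsimp only [if_true]
          have hl : (List.range' (max (a - 1) 1) (min 1 (a - 1))).reverse = [a - 1] := by
            rw [show min 1 (a - 1) = 1 by omega, show max (a - 1) 1 = a - 1 by omega]
            rfl
          rw [hl, firstFree, List.find?_cons_of_pos (by simp only [decide_eq_true_eq]; exact hfree)]
          rfl
        have hfwd : naplesStep n 1 (Finset.Icc l r) a false =
            if r < n then some (r + 1) else none := by
          rw [naplesStep, if_neg (not_not_intro hmem')]
          dsimp only [Bool.false_eq_true, if_false]
          rw [hal]
          exact firstFree_Icc l r n h2 h3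
        rw [hback, hfwd] at hodd
        have hins : insert (a - 1) (Finset.Icc l r) = Finset.Icc (l - 1) r := by
          ext x
          simp only [Finset.mem_insert, Finset.mem_Icc]
          omega
        simp only [Option.elim] at hodd
        rw [hins] at hodd
        refine ⟨hal, ha2, ?_⟩
        rcases Nat.even_or_odd (cnt n rest (Finset.Icc (l - 1) r)) with hev | hb
        · -- forward branch must be odd
          right
          have hodd' : Odd ((if r < n then some (r + 1) else none).elim 0
              (fun s => cnt n rest (insert s (Finset.Icc l r)))) := by
            rcases Nat.even_or_odd ((if r < n then some (r + 1) else none).elim 0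
              (fun s => cnt n rest (insert s (Finset.Icc l r)))) with he | ho
            · exfalso
              have := (Nat.even_add.mpr ?_ : Even (cnt n rest (Finset.Icc (l - 1) r) +
                (if r < n then some (r + 1) else none).elim 0
                  (fun s => cnt n rest (insert s (Finset.Icc l r)))))
              · exact (Nat.not_even_iff_odd.mpr hodd) this
              · simp [hev, he]
            · exact ho
          by_cases hr : r < n
          · rw [if_pos hr] at hodd'
            simp only [Option.elim] at hodd'
            have hins2 : insert (r + 1) (Finset.Icc l r) = Finset.Icc l (r + 1) := by
              ext x
              simp only [Finset.mem_insert, Finset.mem_Icc]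
              omega
            rw [hins2] at hodd'
            have := ih l (r + 1) h1 (by omega) (by omega)
              (by simp only [List.length_cons] at h4; omega) hodd'
            rwa [hal]
          · rw [if_neg hr] at hodd'
            simp only [Option.elim] at hodd'
            exact absurd hodd' (by simp [Nat.odd_iff])
        · -- back branch odd
          left
          have := ih (l - 1) r (by omega) (by omega) h3
            (by simp only [List.length_cons] at h4; omega) hb
          rwa [hal]
      · -- irrelevant: back behaves like forward, count even
        exfalso
        have hsame : naplesStep n 1 (Finset.Icc l r) a true =
            naplesStep n 1 (Finset.Icc l r) a false := by
          rw [naplesStep, naplesStep, if_neg (not_not_intro hmem), if_neg (not_not_intro hmem)]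
          dsimp only [if_true, Bool.false_eq_true, if_false]
          have hnone : firstFree (Finset.Icc l r)
              ((List.range' (max (a - 1) 1) (min 1 (a - 1))).reverse) = none := by
            rw [not_and_or, not_le, Decidable.not_not] at hrel
            rcases hrel with h | h
            · rw [show min 1 (a - 1) = 0 by omega]
              rfl
            · have hgt : 2 ≤ a := by
                rw [Finset.mem_Icc] at h
                omega
              have : (List.range' (max (a - 1) 1) (min 1 (a - 1))).reverse = [a - 1] := by
                rw [show min 1 (a - 1) = 1 by omega, show max (a - 1) 1 = a - 1 by omega]
                rfl
              rw [this, firstFree, List.find?_cons_of_neg (by simp only [decide_eq_true_eq, Decidable.not_not]; exact h)]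
              rfl
          rw [hnone]
          rfl
        rw [hsame] at hodd
        rcases hodd with ⟨k, hk⟩
        omega
    · -- a free: both coins park at a, count even
      exfalso
      have hsame : naplesStep n 1 (Finset.Icc l r) a true = some a := by
        rw [naplesStep, if_pos hmem]
      have hsame2 : naplesStep n 1 (Finset.Icc l r) a false = some a := by
        rw [naplesStep, if_pos hmem]
      rw [hsame, hsame2] at hodd
      rcases hodd with ⟨k, hk⟩
      omega

lemma Q_head : ∀ {l a : ℕ} {rest : List ℕ}, Q l (a :: rest) → a = l ∧ 2 ≤ a := by
  intro l a rest h
  exact ⟨h.1, h.2.1⟩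

lemma Q_step : ∀ (rest : List ℕ) (l a : ℕ), Q l (a :: rest) →
    ∀ (j : ℕ) (h : j + 1 < (a :: rest).length),
      (a :: rest).get ⟨j + 1, h⟩ = (a :: rest).get ⟨j, by omega⟩ ∨
      (a :: rest).get ⟨j + 1, h⟩ + 1 = (a :: rest).get ⟨j, by omega⟩ := by
  intro rest
  induction rest with
  | nil =>
    intro l a _ j h
    simp at h
  | cons b rest' ih =>
    intro l a hq j h
    obtain ⟨hal, ha2, hnext⟩ := hq
    match j with
    | 0 =>
      have hb : b = a - 1 ∨ b = a := by
        rcases hnext with h' | h'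
        · left; exact (Q_head h').1
        · right; exact (Q_head h').1
      simp only [List.get]
      rcases hb with h' | h'
      · right; omega
      · left; exact h'
    | j' + 1 =>
      have h' : j' + 1 < (b :: rest').length := by
        simpa using h
      have := fun lq hq' => ih lq b hq' j' h'
      rcases hnext with hq' | hq'
      · exact this (a - 1) hq'
      · exact this a hq'

lemma Q_last : ∀ (prefs : List ℕ) (l : ℕ), Q l prefs → ∀ (h : prefs ≠ []),
    prefs.getLast h = 2 := by
  intro prefs
  induction prefs with
  | nil => intro l _ h; exact absurd rfl h
  | cons a rest ih =>
    intro l hq h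
    obtain ⟨hal, ha2, hnext⟩ := hq
    match rest, hnext with
    | [], hnext =>
      simp only [List.getLast]
      rcases hnext with h1 | h1
      · have : a - 1 = 1 := h1
        omega
      · have : a = 1 := h1
        omega
    | b :: rest', hnext =>
      rw [List.getLast_cons (by simp)]
      rcases hnext with h1 | h1
      · exact ih (a - 1) h1 (by simp)
      · exact ih a h1 (by simp)

lemma Q_head' : ∀ (prefs : List ℕ) (l : ℕ) (h : 0 < prefs.length), Q l prefs →
    prefs.get ⟨0, h⟩ = l := by
  intro prefs l h hq
  cases prefs with
  | nil => simp at h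
  | cons a rest => exact hq.1

lemma Q_chain : ∀ (prefs : List ℕ) (l : ℕ), Q l prefs →
    ∀ (j : ℕ) (h : j + 1 < prefs.length),
      prefs.get ⟨j + 1, h⟩ = prefs.get ⟨j, by omega⟩ ∨
      prefs.get ⟨j + 1, h⟩ + 1 = prefs.get ⟨j, by omega⟩ := by
  intro prefs l hq j h
  cases prefs with
  | nil => simp at h
  | cons a rest => exact Q_step rest l a hq j h


/-- If `g(α)` is odd then `α` is a staircase tuple. -/
theorem stmt9 (n : ℕ) (hn : 2 ≤ n) (α : Fin n → ℕ)
    (hα : ∀ i, 1 ≤ α i ∧ α i ≤ n) (hodd : Odd (g n α)) :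
    Staircase hn α := by
  obtain ⟨m, rfl⟩ : ∃ m, n = m + 1 := ⟨n - 1, by omega⟩
  rw [g_eq_cnt, ← Finset.Icc_self] at hodd
  have hlen : (List.ofFn fun i : Fin m => α i.succ).length = m := by simp
  have hq : Q (α 0) (List.ofFn fun i : Fin m => α i.succ) :=
    main_parity (m + 1) _ (α 0) (α 0)
      (hα 0).1 le_rfl (hα 0).2 (by rw [hlen]; omega) hodd
  have hm : 1 ≤ m := by omega
  have hget : ∀ (j : ℕ) (hj : j < (List.ofFn fun i : Fin m => α i.succ).length),
      (List.ofFn fun i : Fin m => α i.succ).get ⟨j, hj⟩ =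
        α ⟨j + 1, by rw [hlen] at hj; omega⟩ := by
    intro j hj
    rw [List.get_ofFn]
    apply congrArg α
    apply Fin.ext
    simp
  have e0 : (⟨0, by omega⟩ : Fin (m + 1)) = 0 := Fin.ext (by simp)
  have part1 : α ⟨0, by omega⟩ = α ⟨1, by omega⟩ := by
    rw [e0]
    have h1 := Q_head' _ (α 0) (by rw [hlen]; omega) hq
    have h2 := hget 0 (by rw [hlen]; omega)
    rw [h1] at h2
    exact h2
  refine ⟨part1, ?_, ?_⟩
  · intro i
    cases i with
    | zero =>
      intro h
      left
      exact part1.symm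
    | succ j =>
      intro h
      have hj1 : j + 1 < (List.ofFn fun i : Fin m => α i.succ).length := by
        rw [hlen]; omega
      have hc := Q_chain _ (α 0) hq j hj1
      rw [hget (j + 1) hj1, hget j (by omega)] at hc
      exact hc
  · -- last entry is 2
    have hne : (List.ofFn fun i : Fin m => α i.succ) ≠ [] := by
      apply List.ne_nil_of_length_pos
      rw [hlen]
      omega
    have hlast := Q_last _ (α 0) hq hne
    rw [List.getLast_eq_getElem, ← List.get_eq_getElem (i := ⟨(List.ofFn fun i : Fin m => α i.succ).length - 1, by rw [hlen]; omega⟩)] at hlast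
    rw [hget _ (by omega)] at hlast
    have hidx : (⟨(List.ofFn fun i : Fin m => α i.succ).length - 1 + 1,
        by rw [hlen]; omega⟩ : Fin (m + 1)) = ⟨m + 1 - 1, by omega⟩ := by
      apply Fin.ext
      simp [hlen]
      omega
    rwa [hidx] at hlast
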